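/- Suppose the grid function u^{n+1} ∈ ℓ²(ℤ) satisfies the implicit relation u^{n+1} = B - Δt·𝔻^α(D u^{n+1}) for some B ∈ ℓ²(ℤ). Then ‖B‖² = ‖u^{n+1}‖² + Δt²·‖𝔻^α(D u^{n+1})‖², where ‖·‖ is the scaled ℓ² norm. In particular ‖u^{n+1}‖ ≤ ‖B‖. -/
import Mathlib
open scoped ENNReal

/-- Discrete fractional Laplacian. -/
noncomputable def fracLap (cα α dx : ℝ) (u : ℤ → ℝ) (j : ℤ) : ℝ :=
  (cα / dx ^ α) * ∑' k : {k : ℤ // k ≠ j},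
    (u k - u j) * (1 - (-1 : ℝ) ^ (j - (k : ℤ))) / ((|(k : ℤ) - j| : ℤ) : ℝ) ^ (1 + α)

/-- Central difference operator. -/
noncomputable def Dc (dx : ℝ) (v : ℤ → ℝ) (j : ℤ) : ℝ := (v (j + 1) - v (j - 1)) / (2 * dx)

/-- Symmetric kernel of the discrete fractional Laplacian. -/
noncomputable def kern (α : ℝ) (m : ℤ) : ℝ :=
  if m = 0 then 0 else (1 - (-1 : ℝ) ^ m) / ((|m| : ℤ) : ℝ) ^ (1 + α)

lemma neg_one_zpow_neg (m : ℤ) : ((-1 : ℝ) ^ (-m)) = (-1 : ℝ) ^ m := by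
  rw [zpow_neg]
  rcases Int.even_or_odd m with h | h
  · rw [h.neg_one_zpow]; norm_num
  · rw [h.neg_one_zpow]; norm_num

lemma kern_even (α : ℝ) (m : ℤ) : kern α (-m) = kern α m := by
  unfold kern
  rw [neg_one_zpow_neg, abs_neg]
  simp only [neg_eq_zero]

lemma kern_abs_le (α : ℝ) (hα : 0 < α) (m : ℤ) :
    |kern α m| ≤ 2 * |(m : ℝ)| ^ (-(1 + α)) := by
  unfold kern
  rcases eq_or_ne m 0 with rfl | hm
  · have h0 : -(1 + α) ≠ 0 := by intro h; linarith
    simp only [if_pos rfl, abs_zero, Int.cast_zero, Real.zero_rpow h0]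
    norm_num
  · rw [if_neg hm]
    have hm1 : (1 : ℝ) ≤ |(m : ℝ)| := by
      rw [← Int.cast_abs]; exact_mod_cast Int.one_le_abs (by simpa using hm)
    have hpos : (0 : ℝ) < |(m : ℝ)| ^ (1 + α) :=
      Real.rpow_pos_of_pos (by linarith) _
    rw [Int.cast_abs, abs_div, abs_of_pos hpos, Real.rpow_neg (by linarith)]
    have h2 : |1 - (-1 : ℝ) ^ m| ≤ 2 := by
      rcases Int.even_or_odd m with h | h
      · rw [h.neg_one_zpow]; norm_num
      · rw [h.neg_one_zpow]; norm_num
    rw [div_eq_mul_inv]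
    exact mul_le_mul_of_nonneg_right h2 (by positivity)

lemma summable_abs_kern (α : ℝ) (hα : 1 ≤ α) : Summable (fun m : ℤ => |kern α m|) :=
  Summable.of_nonneg_of_le (fun m => abs_nonneg _) (kern_abs_le α (by linarith))
    ((Real.summable_abs_int_rpow (by linarith : (1:ℝ) < 1 + α)).mul_left 2)

lemma fracLap_eq (cα α dx : ℝ) (v : ℤ → ℝ) (j : ℤ) :
    fracLap cα α dx v j = (cα / dx ^ α) * ∑' m : ℤ, (v (j - m) - v j) * kern α m := by
  unfold fracLap
  congr 1
  set f : ℤ → ℝ := fun k =>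
    (v k - v j) * (1 - (-1 : ℝ) ^ (j - k)) / ((|k - j| : ℤ) : ℝ) ^ (1 + α) with hf
  have h1 : ∑' k : {k : ℤ // k ≠ j}, f k = ∑' k : ℤ, Set.indicator {k : ℤ | k ≠ j} f k :=
    tsum_subtype {k : ℤ | k ≠ j} f
  rw [show (∑' k : {k : ℤ // k ≠ j},
      (v k - v j) * (1 - (-1 : ℝ) ^ (j - (k : ℤ))) / ((|(k : ℤ) - j| : ℤ) : ℝ) ^ (1 + α))
      = ∑' k : {k : ℤ // k ≠ j}, f k from rfl, h1,
    ← (Equiv.subLeft j).tsum_eq (fun k => Set.indicator {k : ℤ | k ≠ j} f k)]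
  refine tsum_congr fun m => ?_
  simp only [Equiv.subLeft_apply]
  rcases eq_or_ne m 0 with rfl | hm
  · rw [Set.indicator_of_notMem (by simp : j - 0 ∉ {k : ℤ | k ≠ j})]
    simp [kern]
  · rw [Set.indicator_of_mem (by simp [sub_eq_self, hm] : j - m ∈ {k : ℤ | k ≠ j})]
    simp only [hf]
    rw [show j - (j - m) = m by ring, show j - m - j = -m by ring, abs_neg, kern,
      if_neg hm, mul_div_assoc]

lemma summable_mul_of_sq {f g : ℤ → ℝ} (hf : Summable fun j => f j ^ 2)
    (hg : Summable fun j => g j ^ 2) : Summable fun j => f j * g j := by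
  apply Summable.of_abs
  refine Summable.of_nonneg_of_le (fun j => abs_nonneg _) (fun j => ?_)
    ((hf.add hg).div_const 2)
  have := sq_nonneg (|f j| - |g j|)
  rw [abs_mul]
  nlinarith [sq_abs (f j), sq_abs (g j)]

lemma sq_summable_of_memℓp {f : ℤ → ℝ} (hf : Memℓp f 2) : Summable fun j => f j ^ 2 := by
  have h := (memℓp_gen_iff (show (0:ℝ) < (2:ℝ≥0∞).toReal by norm_num)).mp hf
  refine h.congr fun i => ?_
  rw [show ((2 : ℝ≥0∞).toReal) = ((2 : ℕ) : ℝ) by norm_num, Real.rpow_natCast,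
    Real.norm_eq_abs, sq_abs]

/-- For the implicit relation u = B - Δt·𝔻^α(Du):
‖B‖² = ‖u‖² + Δt²‖𝔻^α(Du)‖², and in particular ‖u‖ ≤ ‖B‖. -/
theorem implicit_step_energy (cα α dx dt : ℝ) (hcα : 0 < cα)
    (hα : α ∈ Set.Ico (1 : ℝ) 2) (hdx : 0 < dx) (hdt : 0 < dt)
    (u B : ℤ → ℝ) (hu : Memℓp u 2) (hB : Memℓp B 2)
    (hscheme : ∀ j : ℤ, u j = B j - dt * fracLap cα α dx (Dc dx u) j) :
    dx * ∑' j : ℤ, (B j) ^ 2 =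
        dx * ∑' j : ℤ, (u j) ^ 2 + dt ^ 2 * (dx * ∑' j : ℤ, (fracLap cα α dx (Dc dx u) j) ^ 2) ∧
      Real.sqrt (dx * ∑' j : ℤ, (u j) ^ 2) ≤ Real.sqrt (dx * ∑' j : ℤ, (B j) ^ 2) := by
  obtain ⟨hα1, hα2⟩ := hα
  have hu2 : Summable fun j => u j ^ 2 := sq_summable_of_memℓp hu
  have hB2 : Summable fun j => B j ^ 2 := sq_summable_of_memℓp hB
  set v : ℤ → ℝ := Dc dx u with hv
  -- express fracLap via the scheme
  have hw : ∀ j, fracLap cα α dx v j = (B j - u j) / dt := by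
    intro j
    have h := hscheme j
    rw [eq_div_iff hdt.ne', mul_comm]
    linarith
  have hw2 : Summable fun j => (fracLap cα α dx v j) ^ 2 := by
    refine Summable.of_nonneg_of_le (fun j => sq_nonneg _) (fun j => ?_)
      (((hB2.mul_left 2).add (hu2.mul_left 2)).div_const (dt ^ 2))
    rw [hw j, div_pow]
    gcongr
    nlinarith [sq_nonneg (B j + u j)]
  -- shifted square summability
  have hushift : ∀ p : ℤ, Summable fun j => u (j + p) ^ 2 := fun p =>
    ((Equiv.addRight p).summable_iff (f := fun j => u j ^ 2)).mpr hu2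
  have hv2 : Summable fun j => v j ^ 2 := by
    refine Summable.of_nonneg_of_le (fun j => sq_nonneg _) (fun j => ?_)
      ((((hushift 1).mul_left 2).add ((hushift (-1)).mul_left 2)).div_const ((2 * dx) ^ 2))
    have hj : v j = (u (j + 1) - u (j + (-1))) / (2 * dx) := by
      rw [hv]; unfold Dc; rw [show j - 1 = j + (-1) by ring]
    rw [hj, div_pow]
    gcongr
    nlinarith [sq_nonneg (u (j + 1) + u (j + (-1)))]
  have hvshift : ∀ m : ℤ, Summable fun j => v (j - m) ^ 2 := fun m =>
    ((Equiv.subRight m).summable_iff (f := fun j => v j ^ 2)).mpr hv2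
  have hdiff2 : ∀ m : ℤ, Summable fun j => (v (j - m) - v j) ^ 2 := by
    intro m
    refine Summable.of_nonneg_of_le (fun j => sq_nonneg _) (fun j => ?_)
      (((hvshift m).mul_left 2).add (hv2.mul_left 2))
    nlinarith [sq_nonneg (v (j - m) + v j)]
  -- correlation sums
  set T : ℤ → ℝ := fun p => ∑' j, u j * u (j + p) with hT
  have hTsum : ∀ p, Summable fun j => u j * u (j + p) := fun p =>
    summable_mul_of_sq hu2 (hushift p)
  have hTneg : ∀ p, T (-p) = T p := by
    intro p
    have h := (Equiv.addRight p).tsum_eq (fun j => u j * u (j + -p))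
    simp only [Equiv.coe_addRight] at h
    calc T (-p) = ∑' j, u j * u (j + -p) := rfl
      _ = ∑' i, u (i + p) * u (i + p + -p) := h.symm
      _ = ∑' i, u i * u (i + p) := by
          refine tsum_congr fun i => ?_
          rw [show i + p + -p = i by ring, mul_comm]
      _ = T p := rfl
  have hAsum : ∀ m : ℤ, Summable fun j => u j * v (j - m) := fun m =>
    summable_mul_of_sq hu2 (hvshift m)
  set A : ℤ → ℝ := fun m => ∑' j, u j * v (j - m) with hA
  have hAeq : ∀ m, A m = (T (1 - m) - T (-1 - m)) / (2 * dx) := by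
    intro m
    have step : ∀ j : ℤ, u j * v (j - m)
        = (u j * u (j + (1 - m)) - u j * u (j + (-1 - m))) / (2 * dx) := by
      intro j
      have hj : v (j - m) = (u (j + (1 - m)) - u (j + (-1 - m))) / (2 * dx) := by
        rw [hv]; unfold Dc
        rw [show j - m + 1 = j + (1 - m) by ring, show j - m - 1 = j + (-1 - m) by ring]
      rw [hj]; ring
    calc A m = ∑' j, (u j * u (j + (1 - m)) - u j * u (j + (-1 - m))) / (2 * dx) :=
          tsum_congr step
      _ = (∑' j, (u j * u (j + (1 - m)) - u j * u (j + (-1 - m)))) / (2 * dx) :=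
          tsum_div_const
      _ = (T (1 - m) - T (-1 - m)) / (2 * dx) := by
          rw [Summable.tsum_sub (hTsum (1 - m)) (hTsum (-1 - m))]
  have hA0 : A 0 = 0 := by
    rw [hAeq 0, show (-1 - 0 : ℤ) = -(1 - 0) by ring, hTneg]
    simp
  have hAodd : ∀ m, A (-m) = -A m := by
    intro m
    rw [hAeq m, hAeq (-m), show (1 - -m : ℤ) = -(-1 - m) by ring, hTneg,
      show (-1 - -m : ℤ) = -(1 - m) by ring, hTneg]
    ring
  have hφsum : ∀ m : ℤ, Summable fun j => u j * (v (j - m) - v j) := fun m =>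
    summable_mul_of_sq hu2 (hdiff2 m)
  set φ : ℤ → ℝ := fun m => ∑' j, u j * (v (j - m) - v j) with hφ
  have hφeq : ∀ m, φ m = A m - A 0 := by
    intro m
    calc φ m = ∑' j, (u j * v (j - m) - u j * v (j - 0)) := by
          refine tsum_congr fun j => ?_
          rw [sub_zero]; ring
      _ = A m - A 0 := Summable.tsum_sub (hAsum m) (hAsum 0)
  have hφodd : ∀ m, φ (-m) = -φ m := by
    intro m; rw [hφeq, hφeq, hAodd, hA0]; ring
  -- Fubini setup
  set Su := ∑' j, u j ^ 2 with hSu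
  set Sv := ∑' j, v j ^ 2 with hSv
  have htsum_vshift : ∀ m : ℤ, ∑' j, v (j - m) ^ 2 = Sv := by
    intro m
    have h := (Equiv.subRight m).tsum_eq (fun j => v j ^ 2)
    simp only [Equiv.subRight_apply] at h
    exact h
  have habs_le : ∀ m : ℤ, ∑' j, |u j * (v (j - m) - v j)| ≤ (Su + (2 * Sv + 2 * Sv)) / 2 := by
    intro m
    have hsum1 : Summable fun j => (u j ^ 2 + (v (j - m) - v j) ^ 2) / 2 :=
      (hu2.add (hdiff2 m)).div_const 2
    have h1 : ∑' j, |u j * (v (j - m) - v j)|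
        ≤ ∑' j, (u j ^ 2 + (v (j - m) - v j) ^ 2) / 2 := by
      refine Summable.tsum_le_tsum (fun j => ?_) (hφsum m).abs hsum1
      rw [abs_mul]
      nlinarith [sq_abs (u j), sq_abs (v (j - m) - v j),
        sq_nonneg (|u j| - |v (j - m) - v j|)]
    have h2 : ∑' j, (u j ^ 2 + (v (j - m) - v j) ^ 2) / 2
        = (Su + ∑' j, (v (j - m) - v j) ^ 2) / 2 := by
      rw [tsum_div_const, Summable.tsum_add hu2 (hdiff2 m)]
    have h3 : ∑' j, (v (j - m) - v j) ^ 2 ≤ 2 * Sv + 2 * Sv := by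
      have h4 := Summable.tsum_le_tsum (f := fun j => (v (j - m) - v j) ^ 2)
        (g := fun j => 2 * v (j - m) ^ 2 + 2 * v j ^ 2)
        (fun j => by
          show (v (j - m) - v j) ^ 2 ≤ 2 * v (j - m) ^ 2 + 2 * v j ^ 2
          nlinarith [sq_nonneg (v (j - m) + v j)]) (hdiff2 m)
        (((hvshift m).mul_left 2).add (hv2.mul_left 2))
      rwa [Summable.tsum_add ((hvshift m).mul_left 2) (hv2.mul_left 2), tsum_mul_left, tsum_mul_left,
        htsum_vshift m] at h4
    refine h1.trans ?_
    rw [h2]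
    linarith
  set F : ℤ → ℤ → ℝ := fun m j => u j * ((v (j - m) - v j) * kern α m) with hF
  have habsF : ∀ m j, |F m j| = |u j * (v (j - m) - v j)| * |kern α m| := by
    intro m j
    rw [show F m j = (u j * (v (j - m) - v j)) * kern α m by rw [hF]; ring, abs_mul]
  have hFunc : Summable (Function.uncurry F) := by
    apply Summable.of_abs
    refine (summable_prod_of_nonneg (f := fun p : ℤ × ℤ => |Function.uncurry F p|)
      (fun p => abs_nonneg _)).mpr ⟨?_, ?_⟩
    · intro m
      exact (((summable_mul_of_sq hu2 (hdiff2 m)).abs.mul_right |kern α m|)).congr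
        fun j => (habsF m j).symm
    · refine Summable.of_nonneg_of_le (fun m => tsum_nonneg fun j => abs_nonneg _)
        (fun m => ?_) ((summable_abs_kern α hα1).mul_right ((Su + (2 * Sv + 2 * Sv)) / 2))
      calc ∑' j, |F m j| = ∑' j, |u j * (v (j - m) - v j)| * |kern α m| :=
            tsum_congr fun j => habsF m j
        _ = (∑' j, |u j * (v (j - m) - v j)|) * |kern α m| := tsum_mul_right
        _ ≤ ((Su + (2 * Sv + 2 * Sv)) / 2) * |kern α m| :=
            mul_le_mul_of_nonneg_right (habs_le m) (abs_nonneg _)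
        _ = |kern α m| * ((Su + (2 * Sv + 2 * Sv)) / 2) := mul_comm _ _
  have hinner : ∀ m : ℤ, ∑' j, F m j = φ m * kern α m := by
    intro m
    calc ∑' j, F m j = ∑' j, (u j * (v (j - m) - v j)) * kern α m :=
          tsum_congr fun j => by rw [hF]; ring
      _ = (∑' j, u j * (v (j - m) - v j)) * kern α m := tsum_mul_right
      _ = φ m * kern α m := rfl
  have hS0 : ∑' j : ℤ, u j * ∑' m : ℤ, (v (j - m) - v j) * kern α m = 0 := by
    have hcomm := Summable.tsum_comm (f := F) hFunc
    have hstep : ∀ j : ℤ, u j * ∑' m, (v (j - m) - v j) * kern α m = ∑' m, F m j := by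
      intro j
      rw [← tsum_mul_left]
    have hzero : ∑' m, φ m * kern α m = 0 := by
      set g : ℤ → ℝ := fun m => φ m * kern α m with hg
      have hgodd : ∀ m, g (-m) = -g m := by
        intro m
        rw [hg]
        simp only
        rw [hφodd, kern_even]
        ring
      have h1 : ∑' m, g m = ∑' m, g (-m) := by
        have h := (Equiv.neg ℤ).tsum_eq g
        simp only [Equiv.neg_apply] at h
        exact h.symm
      have h2 : ∑' m, g (-m) = -∑' m, g m := by
        calc ∑' m, g (-m) = ∑' m, -g m := tsum_congr fun m => hgodd m
          _ = -∑' m, g m := tsum_neg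
      linarith
    calc ∑' j : ℤ, u j * ∑' m : ℤ, (v (j - m) - v j) * kern α m
        = ∑' j, ∑' m, F m j := tsum_congr hstep
      _ = ∑' m, ∑' j, F m j := hcomm
      _ = ∑' m, φ m * kern α m := tsum_congr hinner
      _ = 0 := hzero
  have hortho : ∑' j, u j * fracLap cα α dx v j = 0 := by
    calc ∑' j, u j * fracLap cα α dx v j
        = ∑' j, (cα / dx ^ α) * (u j * ∑' m, (v (j - m) - v j) * kern α m) :=
          tsum_congr fun j => by rw [fracLap_eq]; ring
      _ = (cα / dx ^ α) * ∑' j : ℤ, u j * ∑' m : ℤ, (v (j - m) - v j) * kern α m :=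
          tsum_mul_left
      _ = 0 := by rw [hS0, mul_zero]
  -- assembly
  have huw : Summable fun j => u j * fracLap cα α dx v j :=
    summable_mul_of_sq hu2 hw2
  have hBexp : ∀ j, B j ^ 2 = u j ^ 2 + (2 * dt * (u j * fracLap cα α dx v j)
      + dt ^ 2 * (fracLap cα α dx v j) ^ 2) := by
    intro j
    have h := hscheme j
    have hB' : B j = u j + dt * fracLap cα α dx v j := by linarith
    rw [hB']; ring
  have hmain : ∑' j, B j ^ 2 = Su + dt ^ 2 * ∑' j, (fracLap cα α dx v j) ^ 2 := by
    calc ∑' j, B j ^ 2 = ∑' j, (u j ^ 2 + (2 * dt * (u j * fracLap cα α dx v j)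
          + dt ^ 2 * (fracLap cα α dx v j) ^ 2)) := tsum_congr hBexp
      _ = Su + ∑' j, (2 * dt * (u j * fracLap cα α dx v j)
          + dt ^ 2 * (fracLap cα α dx v j) ^ 2) :=
          Summable.tsum_add hu2 ((huw.mul_left _).add (hw2.mul_left _))
      _ = Su + (2 * dt * ∑' j, (u j * fracLap cα α dx v j)
          + dt ^ 2 * ∑' j, (fracLap cα α dx v j) ^ 2) := by
          rw [Summable.tsum_add (huw.mul_left _) (hw2.mul_left _), tsum_mul_left, tsum_mul_left]
      _ = Su + dt ^ 2 * ∑' j, (fracLap cα α dx v j) ^ 2 := by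
          rw [hortho]; ring
  constructor
  · rw [hmain]; ring
  · apply Real.sqrt_le_sqrt
    have hnn : 0 ≤ ∑' j, (fracLap cα α dx v j) ^ 2 := tsum_nonneg fun j => sq_nonneg _
    nlinarith [hmain, hdx.le, sq_nonneg dt,
      mul_nonneg (mul_nonneg (sq_nonneg dt) hdx.le) hnn]
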